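/- For any discrete group Γ, the largest Hausdorff quotient of Hom(Γ, Homeo⁺(ℝ))/Homeo⁺(ℝ) (the quotient of the representation space, with compact-open topology, by the conjugation action) consists of a single point. Equivalently: for every representation ρ : Γ → Homeo⁺(ℝ), every finite symmetric set S ⊂ Γ, and every ε > 0, there exists h ∈ Homeo⁺(ℝ) such that |h∘ρ(s)∘h⁻¹(x) − x| < ε for all s ∈ S and x ∈ ℝ. -/

import Mathlib

open Set Function Filter MeasureTheory

/-- An orientation-preserving homeomorphism of `ℝ` commuting with `x ↦ x + 1`,
i.e. a lift of an orientation-preserving circle homeomorphism. -/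
structure HomeoZR : Type where
  toFun : ℝ → ℝ
  invFun : ℝ → ℝ
  left_inv : Function.LeftInverse invFun toFun
  right_inv : Function.RightInverse invFun toFun
  strictMono : StrictMono toFun
  map_add_one : ∀ x, toFun (x + 1) = toFun x + 1

namespace HomeoZR

/-- The identity. -/
protected def id : HomeoZR :=
  ⟨_root_.id, _root_.id, fun _ => rfl, fun _ => rfl, strictMono_id, fun _ => rfl⟩

/-- Composition `f ∘ g`. -/
protected def comp (f g : HomeoZR) : HomeoZR where
  toFun := f.toFun ∘ g.toFun
  invFun := g.invFun ∘ f.invFun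
  left_inv := fun x => by
    show g.invFun (f.invFun (f.toFun (g.toFun x))) = x
    rw [f.left_inv, g.left_inv]
  right_inv := fun x => by
    show f.toFun (g.toFun (g.invFun (f.invFun x))) = x
    rw [g.right_inv, f.right_inv]
  strictMono := f.strictMono.comp g.strictMono
  map_add_one := fun x => by
    show f.toFun (g.toFun (x + 1)) = f.toFun (g.toFun x) + 1
    rw [g.map_add_one, f.map_add_one]

/-- Inverse. -/
protected def symm (f : HomeoZR) : HomeoZR where
  toFun := f.invFun
  invFun := f.toFun
  left_inv := f.right_inv
  right_inv := f.left_inv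
  strictMono := by
    intro x y hxy
    rcases lt_trichotomy (f.invFun x) (f.invFun y) with h | h | h
    · exact h
    · exact absurd (by rw [← f.right_inv x, ← f.right_inv y, h]) (ne_of_lt hxy)
    · have h2 := f.strictMono h
      rw [f.right_inv, f.right_inv] at h2
      exact absurd h2 (lt_asymm hxy)
  map_add_one := fun x => by
    have h1 : f.invFun (f.toFun (f.invFun x + 1)) = f.invFun (x + 1) := by
      rw [f.map_add_one, f.right_inv]
    rw [f.left_inv] at h1
    exact h1.symm

/-- The associated monotone degree-one lift. -/
def toLift (f : HomeoZR) : CircleDeg1Lift :=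
  ⟨⟨f.toFun, f.strictMono.monotone⟩, f.map_add_one⟩

/-- The translation number `rot̃(f)`. -/
noncomputable def transNum (f : HomeoZR) : ℝ :=
  f.toLift.translationNumber

/-- The canonical lift of the underlying circle homeomorphism: the lift whose
translation number lies in `[0,1)`, as a plain function. -/
noncomputable def canon (f : HomeoZR) : ℝ → ℝ :=
  fun x => f.toFun x - (⌊f.transNum⌋ : ℝ)

/-- The periodic points of the underlying circle homeomorphism, as a
`ℤ`-periodic subset of `ℝ`. -/
def Per (f : HomeoZR) : Set ℝ :=
  {x | ∃ n : ℕ, 0 < n ∧ ∃ m : ℤ, f.toFun^[n] x = x + m}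

/-- The fixed points of the underlying circle homeomorphism, as a subset of `ℝ`. -/
def FixS (f : HomeoZR) : Set ℝ :=
  {x | ∃ m : ℤ, f.toFun x = x + m}

/-- `q(f)`: the minimal period of the underlying circle homeomorphism. -/
noncomputable def q (f : HomeoZR) : ℕ :=
  sInf {n : ℕ | 0 < n ∧ ∃ x : ℝ, ∃ m : ℤ, f.toFun^[n] x = x + m}

/-- `p(f)`: the least `p ≥ 0` with `rot(f) = p / q(f)` mod `ℤ`. -/
noncomputable def p (f : HomeoZR) : ℕ :=
  sInf {p : ℕ | ∃ m : ℤ, f.transNum = (p : ℝ) / (f.q : ℝ) + (m : ℝ)}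

/-- Natural powers. -/
protected def npow (f : HomeoZR) : ℕ → HomeoZR
  | 0 => HomeoZR.id
  | n + 1 => (f.npow n).comp f

/-- Integer powers. -/
protected def zpow (f : HomeoZR) (k : ℤ) : HomeoZR :=
  if 0 ≤ k then f.npow k.toNat else f.symm.npow (-k).toNat

end HomeoZR

/-- `f` has rational rotation number. -/
def RatRot (f : HomeoZR) : Prop := ∃ r : ℚ, f.transNum = (r : ℝ)

/-- `F` is a positive one-parameter family (one-parameter group) commuting with `f`:
for `t ≠ 0` the fixed set of `F t` is the frontier of `Per f`, and for `t > 0` the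
canonical lift of `F t` moves every point off the frontier strictly to the right. -/
def PosFamily (f : HomeoZR) (F : ℝ → HomeoZR) : Prop :=
  (∀ s t, (F (s + t)).toFun = (F s).toFun ∘ (F t).toFun) ∧
  (∀ t, (F t).toFun ∘ f.toFun = f.toFun ∘ (F t).toFun) ∧
  (∀ t, t ≠ 0 → (F t).FixS = frontier f.Per) ∧
  (∀ t, 0 < t → ∀ x, x ∉ frontier f.Per → x < (F t).canon x)

/-- `δ_{f,g}(x,t)`, where `F` is a positive one-parameter family commuting with `f`. -/
noncomputable def delta (F : ℝ → HomeoZR) (g : HomeoZR) (x t : ℝ) : ℝ :=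
  ((F t).canon ∘ g.canon)^[g.q] x - x - (g.p : ℝ)

/-- Persistent periodic points. -/
def Pset (F : ℝ → HomeoZR) (g : HomeoZR) : Set ℝ := {x | ∀ t, delta F g x t = 0}

/-- Never-periodic points. -/
def Nset (F : ℝ → HomeoZR) (g : HomeoZR) : Set ℝ := {x | ∀ t, delta F g x t ≠ 0}

/-- Points periodic at a unique time. -/
def Uset (F : ℝ → HomeoZR) (g : HomeoZR) : Set ℝ := {x | ∃! t, delta F g x t = 0}

/-- `x` has a finite orbit in the circle under the group generated by `f` and `g`. -/
def FiniteOrbit (f g : HomeoZR) (x : ℝ) : Prop :=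
  ∃ S : Set ℝ, S.Finite ∧ x ∈ S ∧
    (∀ y ∈ S, ∃ z ∈ S, ∃ m : ℤ, f.toFun y = z + m) ∧
    (∀ y ∈ S, ∃ z ∈ S, ∃ m : ℤ, g.toFun y = z + m)

/-- `τ(f_1, …, f_n) = rot̃(f_n ∘ ⋯ ∘ f_1) − Σ rot̃(f_i)`. -/
noncomputable def tau (L : List HomeoZR) : ℝ :=
  (L.foldl (fun h u => u.comp h) HomeoZR.id).transNum
    - (L.map HomeoZR.transNum).sum

lemma aux_pl (x : ℤ → ℝ) (hx : ∀ k, x k + 1 ≤ x (k + 1)) :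
    ∃ X : ℝ ≃o ℝ, (∀ m : ℤ, X (m : ℝ) = x m) ∧
      ∀ t : ℝ, x ⌊t⌋ ≤ X t ∧ X t ≤ x (⌊t⌋ + 1) := by
  classical
  have hmono : StrictMono x := strictMono_int_of_lt_succ fun k => by linarith [hx k]
  -- growth bounds
  have hupN : ∀ n : ℕ, x 0 + n ≤ x n := by
    intro n
    induction n with
    | zero => simp
    | succ n ih =>
      have := hx n
      push_cast
      push_cast at ih
      linarith
  have hdnN : ∀ n : ℕ, x (-n) ≤ x 0 - n := by
    intro n
    induction n with
    | zero => simp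
    | succ n ih =>
      have h2 := hx (-(n + 1 : ℕ))
      have he : (-(n + 1 : ℕ) : ℤ) + 1 = -(n : ℕ) := by push_cast; ring
      rw [he] at h2
      push_cast
      push_cast at ih h2
      linarith
  set X : ℝ → ℝ := fun t => x ⌊t⌋ + (t - ⌊t⌋) * (x (⌊t⌋ + 1) - x ⌊t⌋) with hX
  have hXint : ∀ m : ℤ, X (m : ℝ) = x m := by
    intro m; simp [hX]
  have hbnd : ∀ t : ℝ, x ⌊t⌋ ≤ X t ∧ X t < x (⌊t⌋ + 1) := by
    intro t
    have h1 : (0:ℝ) ≤ t - ⌊t⌋ := by linarith [Int.floor_le t]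
    have h2 : t - ⌊t⌋ < 1 := by linarith [Int.lt_floor_add_one t]
    have h3 : (1:ℝ) ≤ x (⌊t⌋ + 1) - x ⌊t⌋ := by linarith [hx ⌊t⌋]
    constructor
    · simp only [hX]; nlinarith
    · simp only [hX]; nlinarith
  have hsm : StrictMono X := by
    intro a b hab
    rcases eq_or_lt_of_le (Int.floor_le_floor hab.le) with hf | hf
    · have h3 : (1:ℝ) ≤ x (⌊a⌋ + 1) - x ⌊a⌋ := by linarith [hx ⌊a⌋]
      simp only [hX, ← hf]
      nlinarith
    · have h1 : X a < x (⌊a⌋ + 1) := (hbnd a).2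
      have h2 : x (⌊a⌋ + 1) ≤ x ⌊b⌋ := hmono.monotone (by omega)
      have h3 : x ⌊b⌋ ≤ X b := (hbnd b).1
      linarith
  have hsurj : Function.Surjective X := by
    intro y
    -- find least m with y < x m
    obtain ⟨m, hm, hmin⟩ : ∃ m, (y < x m) ∧ ∀ z, y < x z → m ≤ z := by
      apply Int.exists_least_of_bdd
      · refine ⟨min 0 ⌈y - x 0⌉, fun z hz => ?_⟩
        rcases le_or_gt 0 z with h0 | h0
        · exact le_trans (min_le_left _ _) h0
        · have hz' : x z ≤ x 0 + z := by
            have : z = -((-z).toNat : ℕ) := by omega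
            rw [this]
            have := hdnN (-z).toNat
            push_cast at this ⊢
            linarith
          have : (⌈y - x 0⌉ : ℝ) ≤ z := by
            have := Int.ceil_le.mpr (show y - x 0 ≤ (z:ℝ) by linarith)
            exact_mod_cast this
          have : ⌈y - x 0⌉ ≤ z := by exact_mod_cast this
          exact le_trans (min_le_right _ _) this
      · refine ⟨max 0 ⌈y - x 0⌉ + 1, ?_⟩
        set n := max 0 ⌈y - x 0⌉ + 1 with hn
        have hn0 : 0 ≤ n := by positivity
        have h1 : x 0 + n ≤ x n := by
          have : n = ((n.toNat : ℕ) : ℤ) := by omega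
          rw [this]
          have := hupN n.toNat
          push_cast at this ⊢
          linarith
        have h2 : y - x 0 ≤ (⌈y - x 0⌉ : ℝ) := Int.le_ceil _
        have h3 : (⌈y - x 0⌉ : ℝ) ≤ ((n : ℤ) : ℝ) - 1 := by
          have : ⌈y - x 0⌉ ≤ n - 1 := by omega
          exact_mod_cast this
        linarith
    set k := m - 1 with hk
    have hky : x k ≤ y := by
      by_contra hlt
      push_neg at hlt
      have := hmin k hlt
      omega
    have hyk : y < x (k + 1) := by
      have : k + 1 = m := by omega
      rw [this]; exact hm
    set d := x (k + 1) - x k with hd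
    have hd0 : (1:ℝ) ≤ d := by linarith [hx k]
    set t : ℝ := k + (y - x k) / d with ht
    have hfrac0 : 0 ≤ (y - x k) / d := div_nonneg (by linarith) (by linarith)
    have hfrac1 : (y - x k) / d < 1 := by
      rw [div_lt_one (by linarith)]
      linarith
    have hft : ⌊t⌋ = k := by
      rw [Int.floor_eq_iff]
      rw [ht]
      constructor <;> push_cast <;> linarith
    refine ⟨t, ?_⟩
    simp only [hX, hft]
    have : (t - k) = (y - x k) / d := by rw [ht]; ring
    rw [this, ← hd, div_mul_cancel₀]
    · ring
    · linarith
  refine ⟨StrictMono.orderIsoOfSurjective X hsm hsurj, ?_, ?_⟩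
  · intro m
    rw [StrictMono.coe_orderIsoOfSurjective]
    exact hXint m
  · intro t
    rw [StrictMono.coe_orderIsoOfSurjective]
    exact ⟨(hbnd t).1, (hbnd t).2.le⟩

/-- Upward orbit-dominating sequence. -/
noncomputable def auxU (φ : ℝ → ℝ) : ℕ → ℝ
  | 0 => 0
  | n + 1 => max (φ (auxU φ n)) (auxU φ n) + 1

/-- Downward orbit-dominating sequence. -/
noncomputable def auxV (ψ : ℝ → ℝ) : ℕ → ℝ
  | 0 => 0
  | n + 1 => min (ψ (auxV ψ n)) (auxV ψ n) - 1

/-- The bi-infinite sequence. -/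
noncomputable def auxX (φ ψ : ℝ → ℝ) (k : ℤ) : ℝ :=
  if 0 ≤ k then auxU φ k.toNat else auxV ψ (-k).toNat

/-- Proposition 2.13. The character space `X(Γ, Homeo⁺(ℝ))` is a
single point: every action of `Γ` on `ℝ` by orientation-preserving homeomorphisms can
be conjugated, on any finite symmetric set and for any `ε > 0`, to be uniformly
`ε`-close to the identity. -/
theorem char_space_of_line_trivial (Γ : Type) [Group Γ]
    (ρ : Γ → ℝ ≃ₜ ℝ)
    (hhom : ∀ a b : Γ, ∀ x : ℝ, ρ (a * b) x = ρ a (ρ b x))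
    (hmono : ∀ γ : Γ, Monotone (ρ γ : ℝ → ℝ))
    (S : Finset Γ) (hsymm : ∀ s ∈ S, s⁻¹ ∈ S)
    (ε : ℝ) (hε : 0 < ε) :
    ∃ h : ℝ ≃ₜ ℝ, Monotone (h : ℝ → ℝ) ∧
      ∀ s ∈ S, ∀ x : ℝ, |h (ρ s (h.symm x)) - x| < ε := by
  classical
  rcases S.eq_empty_or_nonempty with hS | hS
  · refine ⟨Homeomorph.refl ℝ, monotone_id, ?_⟩
    simp [hS]
  -- ρ 1 = id and ρ s ∘ ρ s⁻¹ = id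
  have hid : ∀ y : ℝ, ρ (1 : Γ) y = y := by
    intro y
    have h1 : ρ (1 : Γ) (ρ (1 : Γ) y) = ρ (1 : Γ) y := by
      rw [← hhom]; simp
    exact (ρ (1 : Γ)).injective h1
  have hinv : ∀ (s : Γ) (y : ℝ), ρ s (ρ s⁻¹ y) = y := by
    intro s y
    rw [← hhom]; simp [hid]
  set φ : ℝ → ℝ := fun y => S.sup' hS fun s => ρ s y with hφ
  set ψ : ℝ → ℝ := fun y => S.inf' hS fun s => ρ s y with hψ
  have hφle : ∀ s ∈ S, ∀ y : ℝ, ρ s y ≤ φ y := fun s hs y => Finset.le_sup' (fun s => ρ s y) hs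
  have hψle : ∀ s ∈ S, ∀ y : ℝ, ψ y ≤ ρ s y := fun s hs y => Finset.inf'_le (fun s => ρ s y) hs
  set x : ℤ → ℝ := auxX φ ψ with hxdef
  -- step inequality
  have hstep : ∀ k : ℤ, x k + 1 ≤ x (k + 1) := by
    intro k
    rcases le_or_gt 0 k with h0 | h0
    · have e1 : x k = auxU φ k.toNat := by simp [hxdef, auxX, h0]
      have e2 : x (k + 1) = auxU φ (k.toNat + 1) := by
        have : 0 ≤ k + 1 := by omega
        have ht : (k + 1).toNat = k.toNat + 1 := by omega
        simp [hxdef, auxX, this, ht]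
      rw [e1, e2]
      simp only [auxU]
      have := le_max_right (φ (auxU φ k.toNat)) (auxU φ k.toNat)
      linarith
    · set n := (-(k + 1)).toNat with hn
      have e1 : x k = auxV ψ (n + 1) := by
        have h1 : ¬ (0 ≤ k) := by omega
        have h2 : (-k).toNat = n + 1 := by omega
        simp [hxdef, auxX, h1, h2]
      have e2 : x (k + 1) = auxV ψ n := by
        rcases eq_or_lt_of_le (show k + 1 ≤ 0 by omega) with h1 | h1
        · have hn0 : n = 0 := by omega
          simp [hxdef, auxX, h1, hn0, auxU, auxV]
        · have h2 : ¬ (0 ≤ k + 1) := by omega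
          simp only [hxdef, auxX, if_neg h2]
          rfl
      rw [e1, e2]
      simp only [auxV]
      have := min_le_right (ψ (auxV ψ n)) (auxV ψ n)
      linarith
  -- generators map x k below x (k+1)
  have hB : ∀ k : ℤ, ∀ s ∈ S, ρ s (x k) ≤ x (k + 1) := by
    intro k s hs
    rcases le_or_gt 0 k with h0 | h0
    · have e1 : x k = auxU φ k.toNat := by simp [hxdef, auxX, h0]
      have e2 : x (k + 1) = auxU φ (k.toNat + 1) := by
        have : 0 ≤ k + 1 := by omega
        have ht : (k + 1).toNat = k.toNat + 1 := by omega
        simp [hxdef, auxX, this, ht]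
      rw [e1, e2]
      simp only [auxU]
      have h1 := hφle s hs (auxU φ k.toNat)
      have h2 := le_max_left (φ (auxU φ k.toNat)) (auxU φ k.toNat)
      linarith
    · set n := (-(k + 1)).toNat with hn
      have e1 : x k = auxV ψ (n + 1) := by
        have h1 : ¬ (0 ≤ k) := by omega
        have h2 : (-k).toNat = n + 1 := by omega
        simp [hxdef, auxX, h1, h2]
      have e2 : x (k + 1) = auxV ψ n := by
        rcases eq_or_lt_of_le (show k + 1 ≤ 0 by omega) with h1 | h1
        · have hn0 : n = 0 := by omega
          simp [hxdef, auxX, h1, hn0, auxU, auxV]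
        · have h2 : ¬ (0 ≤ k + 1) := by omega
          simp only [hxdef, auxX, if_neg h2]
          rfl
      rw [e1, e2]
      have h1 : auxV ψ (n + 1) ≤ ρ s⁻¹ (auxV ψ n) := by
        simp only [auxV]
        have h2 := hψle s⁻¹ (hsymm s hs) (auxV ψ n)
        have h3 := min_le_left (ψ (auxV ψ n)) (auxV ψ n)
        linarith
      have h4 := hmono s h1
      rwa [hinv s (auxV ψ n)] at h4
  have hC : ∀ k : ℤ, ∀ s ∈ S, x k ≤ ρ s (x (k + 1)) := by
    intro k s hs
    have h1 := hB k s⁻¹ (hsymm s hs)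
    have h2 := hmono s h1
    rwa [hinv s (x k)] at h2
  -- piecewise linear interpolation
  obtain ⟨X, hXint, hXbnd⟩ := aux_pl x hstep
  set δ : ℝ := ε / 3 with hδ
  have hδ0 : 0 < δ := by positivity
  set E : ℝ ≃o ℝ := (OrderIso.mulLeft₀ δ⁻¹ (by positivity)).trans X with hE
  have hEval : ∀ t : ℝ, E t = X (δ⁻¹ * t) := fun t => rfl
  refine ⟨E.toHomeomorph.symm, ?_, ?_⟩
  · exact E.symm.monotone
  · intro s hs y
    have hsy : (E.toHomeomorph.symm.symm : ℝ → ℝ) y = E y := rfl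
    rw [hsy]
    set k : ℤ := ⌊δ⁻¹ * y⌋ with hk
    have hy1 : (k : ℝ) ≤ δ⁻¹ * y := Int.floor_le _
    have hy2 : δ⁻¹ * y < k + 1 := Int.lt_floor_add_one _
    have hyl : δ * k ≤ y := by
      rw [show y = δ * (δ⁻¹ * y) by field_simp]
      exact mul_le_mul_of_nonneg_left hy1 hδ0.le
    have hyu : y ≤ δ * (k + 1) := by
      rw [show y = δ * (δ⁻¹ * y) by field_simp]
      exact mul_le_mul_of_nonneg_left hy2.le hδ0.le
    have hbd := hXbnd (δ⁻¹ * y)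
    rw [← hEval y, ← hk] at hbd
    -- ρ s (E y) ∈ [x (k-1), x (k+2)]
    have hru : ρ s (E y) ≤ x (k + 1 + 1) :=
      le_trans (hmono s hbd.2) (hB (k + 1) s hs)
    have hrl : x (k - 1) ≤ ρ s (E y) := by
      have h1 := hC (k - 1) s hs
      rw [show k - 1 + 1 = k by ring] at h1
      exact le_trans h1 (hmono s hbd.1)
    -- transfer through E.symm
    have hEm : ∀ m : ℤ, E (δ * m) = x m := by
      intro m
      rw [hEval, inv_mul_cancel_left₀ (ne_of_gt hδ0), hXint]
    rw [show k + 1 + 1 = k + 2 from by ring] at hru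
    have hwu : E.symm (ρ s (E y)) ≤ δ * ((k : ℝ) + 2) := by
      have h1 : ρ s (E y) ≤ E (δ * ((k : ℝ) + 2)) := by
        have h0 := hEm (k + 2)
        push_cast at h0
        rw [h0]
        exact hru
      have h2 := E.symm.monotone h1
      rwa [OrderIso.symm_apply_apply] at h2
    have hwl : δ * ((k : ℝ) - 1) ≤ E.symm (ρ s (E y)) := by
      have h1 : E (δ * ((k : ℝ) - 1)) ≤ ρ s (E y) := by
        have h0 := hEm (k - 1)
        push_cast at h0
        rw [h0]
        exact hrl
      have h2 := E.symm.monotone h1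
      rwa [OrderIso.symm_apply_apply] at h2
    have hcoe : (E.toHomeomorph.symm : ℝ → ℝ) (ρ s (E y)) = E.symm (ρ s (E y)) := rfl
    rw [hcoe]
    rw [abs_sub_lt_iff]
    push_cast at hwu hwl
    constructor <;> nlinarith
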